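/- arXiv:2102.05163 — 2 statements merged into one kernel-verified Lean document; each statement's English description precedes it below -/
import Mathlib

section
/- Let κ > 0, let X be a standard N-dimensional Gaussian vector, let 𝟏 be the all-ones vector in ℝ^N, and let 𝟏_k denote the vector whose first N - k coordinates are +1 and last k coordinates are -1. Then for all integers m with 0 < m ≤ εN (ε sufficiently small depending on κ), P(|⟨𝟏,X⟩| ≤ κ√N) - P(|⟨𝟏,X⟩| ≤ κ√N and |⟨𝟏_{m/2},X⟩| ≤ κ√N) ≥ c√(m/N) for a constant c > 0 depending only on κ. -/
open MeasureTheory Set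

open ProbabilityTheory Real

open scoped ENNReal NNReal

noncomputable section

/-- Standard `N`-dimensional Gaussian measure. -/
def stdGaussianVec (N : ℕ) : Measure (Fin N → ℝ) :=
  Measure.pi fun _ => ProbabilityTheory.gaussianReal 0 1

/-- The vector whose first `N - k` coordinates are `+1` and last `k` coordinates are `-1`. -/
def oneFlip (N k : ℕ) : Fin N → ℝ := fun i => if (i : ℕ) < N - k then 1 else -1

lemma gauss_pdf_prod (v₁ v₂ : ℝ≥0) (h₁ : v₁ ≠ 0) (h₂ : v₂ ≠ 0) (z x : ℝ) :
    gaussianPDFReal 0 v₁ x * gaussianPDFReal 0 v₂ (z - x)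
      = gaussianPDFReal 0 (v₁ + v₂) z *
        gaussianPDFReal ((v₁ : ℝ) * z / ((v₁ : ℝ) + v₂)) (v₁ * v₂ / (v₁ + v₂)) x := by
  have ha : (0:ℝ) < v₁ := lt_of_le_of_ne v₁.coe_nonneg (by exact_mod_cast h₁.symm)
  have hb : (0:ℝ) < v₂ := lt_of_le_of_ne v₂.coe_nonneg (by exact_mod_cast h₂.symm)
  have hs : (0:ℝ) < (v₁:ℝ) + v₂ := by linarith
  have hw : ((v₁ * v₂ / (v₁ + v₂) : ℝ≥0) : ℝ) = (v₁:ℝ) * v₂ / ((v₁:ℝ) + v₂) := by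
    push_cast; ring
  simp only [gaussianPDFReal, NNReal.coe_add, hw, sub_zero]
  have hsqrt : (√(2 * π * v₁))⁻¹ * (√(2 * π * v₂))⁻¹
      = (√(2 * π * ((v₁:ℝ) + v₂)))⁻¹ * (√(2 * π * ((v₁:ℝ) * v₂ / ((v₁:ℝ) + v₂))))⁻¹ := by
    rw [← mul_inv, ← mul_inv, ← Real.sqrt_mul (by positivity), ← Real.sqrt_mul (by positivity)]
    congr 1
    field_simp
  have hexp : rexp (-x ^ 2 / (2 * v₁)) * rexp (-(z - x) ^ 2 / (2 * v₂))
      = rexp (-z ^ 2 / (2 * ((v₁:ℝ) + v₂))) *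
        rexp (-(x - (v₁:ℝ) * z / ((v₁:ℝ) + v₂)) ^ 2 / (2 * ((v₁:ℝ) * v₂ / ((v₁:ℝ) + v₂)))) := by
    rw [← Real.exp_add, ← Real.exp_add]
    congr 1
    field_simp
    ring
  calc (√(2 * π * v₁))⁻¹ * rexp (-x ^ 2 / (2 * v₁)) *
        ((√(2 * π * v₂))⁻¹ * rexp (-(z - x) ^ 2 / (2 * v₂)))
      = (√(2 * π * v₁))⁻¹ * (√(2 * π * v₂))⁻¹ *
        (rexp (-x ^ 2 / (2 * v₁)) * rexp (-(z - x) ^ 2 / (2 * v₂))) := by ring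
    _ = _ := by rw [hsqrt, hexp]; ring

lemma gauss_conv (v₁ v₂ : ℝ≥0) (h₁ : v₁ ≠ 0) :
    ((gaussianReal 0 v₁).prod (gaussianReal 0 v₂)).map (fun p : ℝ × ℝ => p.1 + p.2)
      = gaussianReal 0 (v₁ + v₂) := by
  by_cases h₂ : v₂ = 0
  · subst h₂
    rw [gaussianReal_zero_var, Measure.prod_dirac, Measure.map_map (by fun_prop) (by fun_prop)]
    simp only [Function.comp_def, add_zero]
    simp [Measure.map_id]
  · have hadd : (v₁ + v₂ : ℝ≥0) ≠ 0 := by positivity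
    have hw : (v₁ * v₂ / (v₁ + v₂) : ℝ≥0) ≠ 0 := by positivity
    ext s hs
    rw [Measure.map_apply (by fun_prop) hs]
    have hT : MeasurableSet ((fun p : ℝ × ℝ => p.1 + p.2) ⁻¹' s) :=
      (measurable_fst.add measurable_snd) hs
    rw [Measure.prod_apply hT]
    have hmk : ∀ x : ℝ, Prod.mk x ⁻¹' ((fun p : ℝ × ℝ => p.1 + p.2) ⁻¹' s)
        = (fun y => x + y) ⁻¹' s := fun x => rfl
    have key : ∀ x : ℝ, (gaussianReal 0 v₂) ((fun y => x + y) ⁻¹' s)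
        = ∫⁻ z in s, gaussianPDF 0 v₂ (z - x) := by
      intro x
      rw [gaussianReal_of_var_ne_zero 0 h₂, withDensity_apply _ ((measurable_const_add x) hs)]
      have h := (measurePreserving_add_left volume x).setLIntegral_comp_preimage_emb
        (measurableEmbedding_addLeft x) (fun z => gaussianPDF 0 v₂ (z - x)) s
      simpa using h
    simp_rw [hmk, key]
    have hmeas : Measurable fun x : ℝ => ∫⁻ z in s, gaussianPDF 0 v₂ (z - x) := by
      apply Measurable.lintegral_prod_right (f := fun x z => gaussianPDF 0 v₂ (z - x))
      exact (measurable_gaussianPDF 0 v₂).comp (measurable_snd.sub measurable_fst)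
    rw [gaussianReal_of_var_ne_zero 0 h₁,
      lintegral_withDensity_eq_lintegral_mul _ (measurable_gaussianPDF 0 v₁) hmeas]
    simp only [Pi.mul_apply]
    have hswap : ∫⁻ x, gaussianPDF 0 v₁ x * ∫⁻ z in s, gaussianPDF 0 v₂ (z - x)
        = ∫⁻ z in s, ∫⁻ x, gaussianPDF 0 v₁ x * gaussianPDF 0 v₂ (z - x) := by
      have step : ∀ x : ℝ, gaussianPDF 0 v₁ x * ∫⁻ z in s, gaussianPDF 0 v₂ (z - x)
          = ∫⁻ z in s, gaussianPDF 0 v₁ x * gaussianPDF 0 v₂ (z - x) := fun x =>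
        (lintegral_const_mul _ ((measurable_gaussianPDF 0 v₂).comp
          (measurable_id.sub_const _))).symm
      simp_rw [step]
      exact lintegral_lintegral_swap
        ((((measurable_gaussianPDF 0 v₁).comp measurable_fst).mul
          ((measurable_gaussianPDF 0 v₂).comp (measurable_snd.sub measurable_fst))).aemeasurable)
    rw [hswap]
    have hinner : ∀ z : ℝ, ∫⁻ x, gaussianPDF 0 v₁ x * gaussianPDF 0 v₂ (z - x)
        = gaussianPDF 0 (v₁ + v₂) z := by
      intro z
      have : ∀ x : ℝ, gaussianPDF 0 v₁ x * gaussianPDF 0 v₂ (z - x)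
          = gaussianPDF 0 (v₁ + v₂) z *
            gaussianPDF ((v₁ : ℝ) * z / ((v₁ : ℝ) + v₂)) (v₁ * v₂ / (v₁ + v₂)) x := by
        intro x
        simp only [gaussianPDF]
        rw [← ENNReal.ofReal_mul (gaussianPDFReal_nonneg _ _ _),
          ← ENNReal.ofReal_mul (gaussianPDFReal_nonneg _ _ _),
          gauss_pdf_prod v₁ v₂ h₁ h₂ z x]
      simp_rw [this]
      rw [lintegral_const_mul _ (measurable_gaussianPDF _ _),
        lintegral_gaussianPDF_eq_one _ hw, mul_one]
    simp_rw [hinner]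
    rw [gaussianReal_of_var_ne_zero 0 hadd, withDensity_apply _ hs]

lemma gauss_sum_fin (n : ℕ) :
    (stdGaussianVec n).map (fun x => ∑ i, x i) = gaussianReal 0 (n : ℝ≥0) := by
  induction n with
  | zero =>
      have : (fun x : Fin 0 → ℝ => ∑ i, x i) = fun _ => (0:ℝ) := by
        ext x; simp
      rw [this]
      have : IsProbabilityMeasure (stdGaussianVec 0) := by
        unfold stdGaussianVec; infer_instance
      rw [Measure.map_const]
      simp [gaussianReal_zero_var]
  | succ n ih =>
      have hmp := measurePreserving_piFinSuccAbove (fun _ : Fin (n+1) => gaussianReal 0 1) 0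
      set e := MeasurableEquiv.piFinSuccAbove (fun _ : Fin (n+1) => ℝ) 0 with he
      have hcomp : (fun x : Fin (n+1) → ℝ => ∑ i, x i)
          = (fun p : ℝ × (Fin n → ℝ) => p.1 + ∑ i, p.2 i) ∘ e := by
        ext x
        simp [e, MeasurableEquiv.piFinSuccAbove, Fin.sum_univ_succ, Fin.succAbove_zero, Fin.tail]
      rw [hcomp, ← Measure.map_map (by fun_prop) e.measurable]
      rw [show (stdGaussianVec (n+1)).map e
          = (gaussianReal 0 1).prod (stdGaussianVec n) from hmp.map_eq]
      have hsplit : (fun p : ℝ × (Fin n → ℝ) => p.1 + ∑ i, p.2 i)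
          = (fun q : ℝ × ℝ => q.1 + q.2) ∘ (Prod.map id (fun x : Fin n → ℝ => ∑ i, x i)) := by
        ext p; simp
      have : SFinite (stdGaussianVec n) := by unfold stdGaussianVec; infer_instance
      rw [hsplit, ← Measure.map_map (by fun_prop) (by fun_prop),
        ← Measure.map_prod_map _ _ measurable_id (by fun_prop), Measure.map_id, ih,
        gauss_conv 1 n one_ne_zero]
      congr 1
      push_cast
      ring

lemma gauss_sum_fintype {ι : Type*} [Fintype ι] :
    (Measure.pi fun _ : ι => gaussianReal 0 1).map (fun x => ∑ i, x i)
      = gaussianReal 0 (Fintype.card ι : ℝ≥0) := by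
  classical
  let e : Fin (Fintype.card ι) ≃ ι := (Fintype.equivFin ι).symm
  have hmp := measurePreserving_piCongrLeft (fun _ : ι => gaussianReal 0 1) e
  rw [show (Measure.pi fun _ : ι => gaussianReal 0 1)
      = (stdGaussianVec (Fintype.card ι)).map (MeasurableEquiv.piCongrLeft (fun _ => ℝ) e)
      from hmp.map_eq.symm,
    Measure.map_map (by fun_prop) (MeasurableEquiv.piCongrLeft (fun _ => ℝ) e).measurable]
  have : (fun x : ι → ℝ => ∑ i, x i) ∘ (MeasurableEquiv.piCongrLeft (fun _ => ℝ) e)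
      = fun x : Fin (Fintype.card ι) → ℝ => ∑ i, x i := by
    ext x
    simp only [Function.comp_apply, MeasurableEquiv.coe_piCongrLeft]
    exact (Fintype.sum_equiv e (fun j => x j) _
      (fun j => (Equiv.piCongrLeft_apply_apply (fun _ => ℝ) e x j).symm)).symm
  rw [this, gauss_sum_fin]

def finSubEquiv (N a : ℕ) (h : a ≤ N) : {i : Fin N // (i : ℕ) < a} ≃ Fin a where
  toFun x := ⟨x.1, x.2⟩
  invFun j := ⟨⟨j, lt_of_lt_of_le j.2 h⟩, j.2⟩
  left_inv x := by ext; rfl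
  right_inv j := rfl

lemma gauss_split (N k : ℕ) (hk : k ≤ N) :
    (stdGaussianVec N).map
      (fun X : Fin N → ℝ => ((∑ i : {i : Fin N // (i:ℕ) < N - k}, X i),
          (∑ i : {i : Fin N // ¬(i:ℕ) < N - k}, X i)))
      = (gaussianReal 0 ((N - k : ℕ) : ℝ≥0)).prod (gaussianReal 0 (k : ℝ≥0)) := by
  classical
  set p : Fin N → Prop := fun i => (i:ℕ) < N - k with hp
  have hmp := measurePreserving_piEquivPiSubtypeProd (fun _ : Fin N => gaussianReal 0 1) p
  set E := MeasurableEquiv.piEquivPiSubtypeProd (fun _ : Fin N => ℝ) p with hE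
  have hcomp : (fun X : Fin N → ℝ => ((∑ i : {i : Fin N // (i:ℕ) < N - k}, X i),
          (∑ i : {i : Fin N // ¬(i:ℕ) < N - k}, X i)))
      = (Prod.map (fun x : {i : Fin N // p i} → ℝ => ∑ i, x i)
          (fun x : {i : Fin N // ¬ p i} → ℝ => ∑ i, x i)) ∘ E := rfl
  rw [hcomp, ← Measure.map_map (by fun_prop) E.measurable]
  unfold stdGaussianVec
  rw [hmp.map_eq,
    ← Measure.map_prod_map _ _ (by fun_prop) (by fun_prop),
    gauss_sum_fintype, gauss_sum_fintype]
  have hc1 : Fintype.card {i : Fin N // p i} = N - k :=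
    (Fintype.card_congr (finSubEquiv N (N - k) (Nat.sub_le N k))).trans (Fintype.card_fin _)
  have hc2 : Fintype.card {i : Fin N // ¬ p i} = k := by
    rw [Fintype.card_subtype_compl, hc1, Fintype.card_fin, Nat.sub_sub_self hk]
  rw [hc1, hc2]

lemma gauss_interval_lb (v : ℝ≥0) (hv : v ≠ 0) (b L D : ℝ) (hL : 0 ≤ L)
    (hbound : ∀ x ∈ Icc b (b + L), x ^ 2 / (2 * (v : ℝ)) ≤ D) :
    L * Real.exp (-D) / Real.sqrt (2 * π * v) ≤ (gaussianReal 0 v (Icc b (b + L))).toReal := by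
  have hvpos : (0:ℝ) < v := lt_of_le_of_ne v.coe_nonneg (by exact_mod_cast hv.symm)
  rw [gaussianReal_apply_eq_integral 0 hv, ENNReal.toReal_ofReal
    (setIntegral_nonneg measurableSet_Icc (fun x _ => gaussianPDFReal_nonneg _ _ _))]
  have hlb : ∀ x ∈ Icc b (b + L),
      Real.exp (-D) / Real.sqrt (2 * π * v) ≤ gaussianPDFReal 0 v x := by
    intro x hx
    rw [gaussianPDFReal, sub_zero, div_eq_inv_mul]
    refine mul_le_mul_of_nonneg_left ?_ (by positivity)
    refine Real.exp_le_exp.2 ?_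
    rw [neg_div]
    exact neg_le_neg (hbound x hx)
  calc L * Real.exp (-D) / Real.sqrt (2 * π * v)
      = ∫ _ in Icc b (b + L), (Real.exp (-D) / Real.sqrt (2 * π * v)) := by
        rw [setIntegral_const, measureReal_def, Real.volume_Icc]
        rw [ENNReal.toReal_ofReal (by linarith)]
        rw [smul_eq_mul]
        ring
    _ ≤ ∫ x in Icc b (b + L), gaussianPDFReal 0 v x := by
        refine setIntegral_mono_on (integrableOn_const ?_)
          ((integrable_gaussianPDFReal 0 v).integrableOn) measurableSet_Icc hlb
        rw [Real.volume_Icc]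
        exact ENNReal.ofReal_ne_top

set_option maxHeartbeats 1000000 in
theorem stmt3 (κ : ℝ) (hκ : 0 < κ) :
    ∃ ε > (0:ℝ), ∃ c > (0:ℝ), ∀ N m : ℕ, 0 < m → Even m → (m : ℝ) ≤ ε * N →
      c * Real.sqrt ((m : ℝ) / N) ≤
        ((stdGaussianVec N) {X | |∑ i, X i| ≤ κ * Real.sqrt N}).toReal -
        ((stdGaussianVec N) {X | |∑ i, X i| ≤ κ * Real.sqrt N ∧
            |∑ i, oneFlip N (m / 2) i * X i| ≤ κ * Real.sqrt N}).toReal := by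
  refine ⟨min 1 (8 * κ ^ 2 / 9), by positivity,
    Real.exp (-κ ^ 2 - 2) / (4 * π * Real.sqrt 2), by positivity, ?_⟩
  intro N m hm hmeven hmε
  classical
  set k := m / 2 with hkdef
  have hm2k : 2 * k = m := Nat.two_mul_div_two_of_even hmeven
  have hk1 : 1 ≤ k := by omega
  -- consequences of m ≤ ε N
  have hεle1 : min (1:ℝ) (8 * κ ^ 2 / 9) ≤ 1 := min_le_left _ _
  have hmN_real : (m : ℝ) ≤ N := by
    have h1 : min (1:ℝ) (8 * κ ^ 2 / 9) * N ≤ 1 * N :=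
      mul_le_mul_of_nonneg_right hεle1 (Nat.cast_nonneg N)
    calc (m:ℝ) ≤ _ := hmε
      _ ≤ 1 * N := h1
      _ = N := one_mul _
  have hmN : m ≤ N := Nat.cast_le.mp hmN_real
  have h9m : 9 * (m : ℝ) ≤ 8 * κ ^ 2 * N := by
    have h := le_trans hmε (mul_le_mul_of_nonneg_right
      (min_le_right (1:ℝ) (8 * κ ^ 2 / 9)) (Nat.cast_nonneg N))
    nlinarith [h]
  have hkN : k ≤ N := le_trans (by omega) hmN
  have hmk_real : (m:ℝ) = 2 * k := by exact_mod_cast hm2k.symm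
  have hNpos : (0:ℝ) < N := by
    have : (1:ℝ) ≤ m := by exact_mod_cast hm
    linarith
  have hNkcast : ((N - k : ℕ) : ℝ) = (N:ℝ) - k := by
    push_cast [Nat.cast_sub hkN]; ring
  have hNk0 : (N - k : ℕ) ≠ 0 := by omega
  have hkpos : (0:ℝ) < k := by exact_mod_cast hk1
  have hNkposR : (0:ℝ) < ((N - k : ℕ) : ℝ) := by
    exact_mod_cast Nat.pos_of_ne_zero hNk0
  -- notation
  set a := κ * Real.sqrt N with hadef
  set sk := Real.sqrt (k : ℝ) with hskdef
  have hskpos : 0 < sk := Real.sqrt_pos.2 hkpos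
  have hapos : 0 < a := mul_pos hκ (Real.sqrt_pos.2 hNpos)
  have hsk_sq : sk ^ 2 = (k:ℝ) := Real.sq_sqrt hkpos.le
  have ha_sq : a ^ 2 = κ ^ 2 * N := by
    rw [hadef, mul_pow, Real.sq_sqrt hNpos.le]
  have h3sk : 3 * sk ≤ 2 * a := by
    have h1 : (3 * sk) ^ 2 ≤ (2 * a) ^ 2 := by
      rw [mul_pow, mul_pow, hsk_sq, ha_sq]
      nlinarith [h9m, hmk_real]
    have h2 := Real.sqrt_le_sqrt h1
    rwa [Real.sqrt_sq (by positivity), Real.sqrt_sq (by positivity)] at h2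
  -- the two coordinate sums
  set V : (Fin N → ℝ) → ℝ := fun X => ∑ i : {i : Fin N // (i:ℕ) < N - k}, X i with hVdef
  set U : (Fin N → ℝ) → ℝ := fun X => ∑ i : {i : Fin N // ¬(i:ℕ) < N - k}, X i with hUdef
  have hVmeas : Measurable V :=
    Finset.measurable_sum _ (fun i _ => measurable_pi_apply _)
  have hUmeas : Measurable U :=
    Finset.measurable_sum _ (fun i _ => measurable_pi_apply _)
  have hsum_split : ∀ (g : Fin N → ℝ),
      ∑ i, g i = (∑ i : {i : Fin N // (i:ℕ) < N - k}, g i)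
        + ∑ i : {i : Fin N // ¬(i:ℕ) < N - k}, g i := by
    intro g
    rw [← Finset.sum_filter_add_sum_filter_not Finset.univ (fun i : Fin N => (i:ℕ) < N - k) g]
    congr 1
    · exact Finset.sum_subtype _ (by simp) g
    · exact Finset.sum_subtype _ (by simp) g
  have hS : ∀ X : Fin N → ℝ, ∑ i, X i = V X + U X := fun X => hsum_split X
  have hT : ∀ X : Fin N → ℝ, ∑ i, oneFlip N k i * X i = V X - U X := by
    intro X
    rw [hsum_split (fun i => oneFlip N k i * X i)]
    have h1 : (∑ i : {i : Fin N // (i:ℕ) < N - k}, oneFlip N k i.1 * X i.1)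
        = V X := by
      apply Finset.sum_congr rfl
      intro i _
      simp [oneFlip, i.2]
    have h2 : (∑ i : {i : Fin N // ¬(i:ℕ) < N - k}, oneFlip N k i.1 * X i.1)
        = - U X := by
      rw [hUdef, ← Finset.sum_neg_distrib]
      apply Finset.sum_congr rfl
      intro i _
      simp [oneFlip, i.2]
    rw [h1, h2]
    ring
  -- measurable sets
  have hsum_meas : Measurable fun X : Fin N → ℝ => ∑ i, X i :=
    Finset.measurable_sum _ (fun i _ => measurable_pi_apply _)
  have hflip_meas : Measurable fun X : Fin N → ℝ => ∑ i, oneFlip N k i * X i :=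
    Finset.measurable_sum _ (fun i _ => (measurable_pi_apply _).const_mul _)
  have hAmeas : MeasurableSet {X : Fin N → ℝ | |∑ i, X i| ≤ a} :=
    measurableSet_le hsum_meas.abs measurable_const
  have hBmeas : MeasurableSet {X : Fin N → ℝ | |∑ i, oneFlip N k i * X i| ≤ a} :=
    measurableSet_le hflip_meas.abs measurable_const
  have hABmeas : MeasurableSet {X : Fin N → ℝ | |∑ i, X i| ≤ a ∧
      |∑ i, oneFlip N k i * X i| ≤ a} := hAmeas.inter hBmeas
  -- rectangle event
  set R : Set (ℝ × ℝ) := (Icc (-a) (-a + sk/2)) ×ˢ (Icc sk (sk + sk)) with hRdef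
  have hRmeas : MeasurableSet R := measurableSet_Icc.prod measurableSet_Icc
  set G : (Fin N → ℝ) → ℝ × ℝ := fun X => (V X, U X) with hGdef
  have hGmeas : Measurable G := hVmeas.prodMk hUmeas
  have hsub : G ⁻¹' R ⊆ {X : Fin N → ℝ | |∑ i, X i| ≤ a} \
      {X : Fin N → ℝ | |∑ i, X i| ≤ a ∧ |∑ i, oneFlip N k i * X i| ≤ a} := by
    intro X hX
    simp only [hRdef, mem_preimage, hGdef, mem_prod, mem_Icc] at hX
    obtain ⟨⟨hv1, hv2⟩, ⟨hu1, hu2⟩⟩ := hX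
    have habs : |∑ i, X i| ≤ a := by
      rw [hS X, abs_le]
      constructor
      · linarith
      · linarith
    refine ⟨habs, fun hcon => ?_⟩
    have h := hcon.2
    rw [hT X, abs_le] at h
    linarith [h.1]
  -- probability measure instance
  have hprob : IsProbabilityMeasure (stdGaussianVec N) := by
    unfold stdGaussianVec; infer_instance
  -- measure difference
  have hd : ((stdGaussianVec N) {X | |∑ i, X i| ≤ a}).toReal -
      ((stdGaussianVec N) {X | |∑ i, X i| ≤ a ∧ |∑ i, oneFlip N k i * X i| ≤ a}).toReal
      = ((stdGaussianVec N) ({X | |∑ i, X i| ≤ a} \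
          {X | |∑ i, X i| ≤ a ∧ |∑ i, oneFlip N k i * X i| ≤ a})).toReal := by
    have hAB_sub : {X : Fin N → ℝ | |∑ i, X i| ≤ a ∧ |∑ i, oneFlip N k i * X i| ≤ a}
        ⊆ {X : Fin N → ℝ | |∑ i, X i| ≤ a} := fun X hX => hX.1
    have key := measure_inter_add_diff (μ := stdGaussianVec N)
      {X : Fin N → ℝ | |∑ i, X i| ≤ a} hABmeas
    rw [inter_eq_self_of_subset_right hAB_sub] at key
    rw [← key, ENNReal.toReal_add (measure_ne_top _ _) (measure_ne_top _ _)]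
    ring
  rw [hd]
  -- lower bound by rectangle probability
  have hmono : ((stdGaussianVec N) (G ⁻¹' R)).toReal ≤
      ((stdGaussianVec N) ({X | |∑ i, X i| ≤ a} \
        {X | |∑ i, X i| ≤ a ∧ |∑ i, oneFlip N k i * X i| ≤ a})).toReal :=
    ENNReal.toReal_mono (measure_ne_top _ _) (measure_mono hsub)
  refine le_trans ?_ hmono
  -- compute rectangle probability
  have hval : ((stdGaussianVec N) (G ⁻¹' R)).toReal
      = (gaussianReal 0 ((N - k : ℕ) : ℝ≥0) (Icc (-a) (-a + sk/2))).toReal *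
        (gaussianReal 0 (k : ℝ≥0) (Icc sk (sk + sk))).toReal := by
    rw [← Measure.map_apply hGmeas hRmeas, hGdef]
    have hmap : (stdGaussianVec N).map (fun X => (V X, U X))
        = (gaussianReal 0 ((N - k : ℕ) : ℝ≥0)).prod (gaussianReal 0 (k : ℝ≥0)) :=
      gauss_split N k hkN
    rw [hmap, hRdef, Measure.prod_prod, ENNReal.toReal_mul]
  rw [hval]
  -- bound each factor
  have hb1 : (sk/2) * Real.exp (-κ^2) / Real.sqrt (2 * π * (((N - k : ℕ) : ℝ≥0) : ℝ))
      ≤ (gaussianReal 0 ((N - k : ℕ) : ℝ≥0) (Icc (-a) (-a + sk/2))).toReal := by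
    apply gauss_interval_lb _ (Nat.cast_ne_zero.2 hNk0) (-a) (sk/2) (κ^2) (by positivity)
    intro x hx
    obtain ⟨hx1, hx2⟩ := hx
    have hcoe : ((((N - k : ℕ) : ℝ≥0)) : ℝ) = (N:ℝ) - k := by
      rw [NNReal.coe_natCast, hNkcast]
    rw [hcoe, div_le_iff₀ (by linarith)]
    have hxa : x^2 ≤ a^2 := by
      apply sq_le_sq'
      · linarith
      · linarith [h3sk, hskpos]
    rw [ha_sq] at hxa
    nlinarith [hmk_real, hmN_real]
  have hb2 : sk * Real.exp (-(2:ℝ)) / Real.sqrt (2 * π * ((k : ℝ≥0) : ℝ))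
      ≤ (gaussianReal 0 (k : ℝ≥0) (Icc sk (sk + sk))).toReal := by
    apply gauss_interval_lb _ (Nat.cast_ne_zero.2 (by omega)) sk sk 2 hskpos.le
    intro x hx
    obtain ⟨hx1, hx2⟩ := hx
    have hcoe : (((k : ℝ≥0)) : ℝ) = (k:ℝ) := NNReal.coe_natCast k
    rw [hcoe, div_le_iff₀ (by linarith)]
    have hx0 : 0 ≤ x := le_trans hskpos.le hx1
    nlinarith [hsk_sq]
  -- combine factors
  have hπ := Real.pi_pos
  have hfac1 : (sk/2) * Real.exp (-κ^2) / Real.sqrt (2 * π * N)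
      ≤ (sk/2) * Real.exp (-κ^2) / Real.sqrt (2 * π * (((N - k : ℕ) : ℝ≥0) : ℝ)) := by
    have hcoe : ((((N - k : ℕ) : ℝ≥0)) : ℝ) = ((N - k : ℕ) : ℝ) := NNReal.coe_natCast _
    apply div_le_div_of_nonneg_left (by positivity) ?_ ?_
    · apply Real.sqrt_pos.2
      rw [hcoe]
      positivity
    · apply Real.sqrt_le_sqrt
      rw [hcoe, hNkcast]
      nlinarith
  have hfac2 : Real.exp (-(2:ℝ)) / Real.sqrt (2 * π)
      = sk * Real.exp (-(2:ℝ)) / Real.sqrt (2 * π * ((k : ℝ≥0) : ℝ)) := by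
    rw [NNReal.coe_natCast, Real.sqrt_mul (by positivity) (k:ℝ), ← hskdef]
    rw [div_eq_div_iff (by positivity) (by positivity)]
    ring
  -- final numeric identity
  have hid : Real.exp (-κ ^ 2 - 2) / (4 * π * Real.sqrt 2) * Real.sqrt ((m : ℝ) / N)
      = ((sk/2) * Real.exp (-κ^2) / Real.sqrt (2 * π * N)) *
        (Real.exp (-(2:ℝ)) / Real.sqrt (2 * π)) := by
    have he : Real.exp (-κ ^ 2 - 2) = Real.exp (-κ^2) * Real.exp (-(2:ℝ)) := by
      rw [← Real.exp_add]; ring_nf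
    have hsqm : Real.sqrt ((m : ℝ) / N) = Real.sqrt 2 * sk / Real.sqrt N := by
      rw [Real.sqrt_div (by positivity) (N:ℝ), hmk_real,
        Real.sqrt_mul (by norm_num : (0:ℝ) ≤ 2) (k:ℝ), hskdef]
    have hsqN : Real.sqrt (2 * π * N) = Real.sqrt (2 * π) * Real.sqrt N := by
      rw [Real.sqrt_mul (by positivity) (N:ℝ)]
    have h2π : Real.sqrt (2 * π) * Real.sqrt (2 * π) = 2 * π :=
      Real.mul_self_sqrt (by positivity)
    have hsN : (0:ℝ) < Real.sqrt N := Real.sqrt_pos.2 hNpos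
    have hs2 : (0:ℝ) < Real.sqrt 2 := by positivity
    have hs2π : (0:ℝ) < Real.sqrt (2 * π) := by positivity
    rw [he, hsqm, hsqN]
    rw [div_mul_div_comm, div_mul_div_comm, div_eq_div_iff (by positivity) (by positivity)]
    linear_combination (Real.exp (-κ ^ 2) * Real.exp (-(2:ℝ)) * Real.sqrt 2 * sk * Real.sqrt N) * h2π
  rw [hid, hfac2]
  apply mul_le_mul (le_trans hfac1 hb1) hb2 ?_ ENNReal.toReal_nonneg
  positivity

end
end

section
/- Let A be a finite nonempty set, let B ⊆ A, and let (σ_i)_{i≥1} be i.i.d. uniform random elements of A. Let R ⊆ A × A be a symmetric relation and set δ = P((σ₁,σ₂) ∈ R) and q = P(σ₁ ∉ B). Define E_k to be the event that σ_i ∉ B for all 1 ≤ i ≤ k and (σ_i, σ_j) ∉ R for all 1 ≤ i < j ≤ k. Then for all integers k with 1 ≤ k ≤ q²/(4δ), P(E_k) ≥ (q - 2kδ/q)^k. -/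
open MeasureTheory
open scoped ENNReal

noncomputable section

section Aux

variable {α : Type*}

open Finset

private lemma measure_finset_eq_sum [MeasurableSpace α] [MeasurableSingletonClass α]
    (m : Measure α) (s : Finset α) : m ↑s = ∑ a ∈ s, m {a} := by
  rw [show (↑s : Set α) = ⋃ b ∈ s, {b} by ext; simp]
  exact measure_biUnion_finset (fun i _ j _ h => Set.disjoint_singleton.2 h)
    (fun b _ => measurableSet_singleton b)

private lemma measure_inter_of_compl_null [MeasurableSpace α] (m : Measure α) {Z : Set α}
    (hZ : m Zᶜ = 0) (S : Set α) : m S = m (S ∩ Z) := by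
  refine le_antisymm ?_ (measure_mono Set.inter_subset_left)
  calc m S ≤ m (S ∩ Z) + m (S \ Z) := measure_le_inter_add_diff m S Z
  _ ≤ m (S ∩ Z) + m Zᶜ := by
      gcongr
      exact fun x hx => hx.2
  _ = m (S ∩ Z) := by rw [hZ, add_zero]

open scoped Classical in
private def goodSet (A B : Finset α) (R : α → α → Prop) (k : ℕ) : Finset (Fin k → α) :=
  (Fintype.piFinset fun _ : Fin k => A).filter
    (fun x => (∀ i, x i ∉ B) ∧ ∀ i j, i ≠ j → ¬ R (x i) (x j))

open scoped Classical in
private lemma mem_goodSet {A B : Finset α} {R : α → α → Prop} {k : ℕ} {x : Fin k → α} :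
    x ∈ goodSet A B R k ↔
      (∀ i, x i ∈ A) ∧ (∀ i, x i ∉ B) ∧ ∀ i j, i ≠ j → ¬ R (x i) (x j) := by
  simp [goodSet, Fintype.mem_piFinset, and_assoc]

private lemma card_goodSet_zero (A B : Finset α) (R : α → α → Prop) :
    (goodSet A B R 0).card = 1 := by
  rw [Finset.card_eq_one]
  refine ⟨(fun i => i.elim0), ?_⟩
  rw [Finset.eq_singleton_iff_unique_mem]
  constructor
  · exact mem_goodSet.2 ⟨fun i => i.elim0, fun i => i.elim0, fun i => i.elim0⟩
  · intro x _
    funext i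
    exact i.elim0

private lemma card_goodSet_one [DecidableEq α] (A B : Finset α) (R : α → α → Prop) :
    (goodSet A B R 1).card = (A \ B).card := by
  classical
  refine Finset.card_bij' (fun x _ => x 0) (fun a _ => fun _ => a) ?_ ?_ ?_ ?_
  · intro x hx
    obtain ⟨h1, h2, _⟩ := mem_goodSet.1 hx
    exact Finset.mem_sdiff.2 ⟨h1 0, h2 0⟩
  · intro a ha
    obtain ⟨ha1, ha2⟩ := Finset.mem_sdiff.1 ha
    exact mem_goodSet.2 ⟨fun _ => ha1, fun _ => ha2,
      fun i j h => absurd (Subsingleton.elim i j) h⟩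
  · intro x hx
    funext i
    rw [Subsingleton.elim i 0]
  · intro a ha
    rfl

open scoped Classical in
private lemma key_count [DecidableEq α] {A B : Finset α} {R : α → α → Prop} (hR : Symmetric R) (k : ℕ) :
    (A \ B).card * (goodSet A B R (k+1)).card ≤
      (goodSet A B R (k+2)).card +
        (k+1) * ((A ×ˢ A).filter fun p => R p.1 p.2).card * (goodSet A B R k).card := by
  classical
  set D : Finset (α × α) := (A ×ˢ A).filter (fun p => R p.1 p.2) with hD
  set T : Finset ((Fin (k+1) → α) × α) := (goodSet A B R (k+1)) ×ˢ (A \ B) with hTdef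
  have hT : T.card = (A \ B).card * (goodSet A B R (k+1)).card := by
    rw [hTdef, Finset.card_product, mul_comm]
  have hsplit : (T.filter (fun p => ∀ i, ¬ R (p.1 i) p.2)).card
      + (T.filter (fun p => ¬ ∀ i, ¬ R (p.1 i) p.2)).card = T.card :=
    Finset.card_filter_add_card_filter_not _
  have hgood : (T.filter (fun p => ∀ i, ¬ R (p.1 i) p.2)).card ≤ (goodSet A B R (k+2)).card := by
    apply Finset.card_le_card_of_injOn (fun p => Fin.snoc p.1 p.2)
    · intro p hp
      rw [Finset.mem_coe, Finset.mem_filter] at hp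
      obtain ⟨hpT, hnoR⟩ := hp
      rw [hTdef, Finset.mem_product] at hpT
      obtain ⟨hp1, hp2⟩ := hpT
      obtain ⟨hg1, hg2, hg3⟩ := mem_goodSet.1 hp1
      obtain ⟨hp2A, hp2B⟩ := Finset.mem_sdiff.1 hp2
      refine mem_goodSet.2 ⟨?_, ?_, ?_⟩
      · intro i
        induction i using Fin.lastCases with
        | last => simpa using hp2A
        | cast i => simpa using hg1 i
      · intro i
        induction i using Fin.lastCases with
        | last => simpa using hp2B
        | cast i => simpa using hg2 i
      · intro i j hij
        induction i using Fin.lastCases with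
        | last =>
          induction j using Fin.lastCases with
          | last => exact absurd rfl hij
          | cast j => simpa using fun h => hnoR j (hR h)
        | cast i =>
          induction j using Fin.lastCases with
          | last => simpa using hnoR i
          | cast j =>
            have : i ≠ j := fun h => hij (by rw [h])
            simpa using hg3 i j this
    · intro p hp q hq h
      have h2 : p.2 = q.2 := by
        have := congrFun h (Fin.last (k+1))
        simpa using this
      have h1 : p.1 = q.1 := by
        funext i
        have := congrFun h i.castSucc
        simpa using this
      exact Prod.ext h1 h2
  have hbad : (T.filter (fun p => ¬ ∀ i, ¬ R (p.1 i) p.2)).card ≤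
      (k+1) * (D.card * (goodSet A B R k).card) := by
    have hsub : T.filter (fun p => ¬ ∀ i, ¬ R (p.1 i) p.2) ⊆
        (Finset.univ : Finset (Fin (k+1))).biUnion
          (fun i => T.filter (fun p => R (p.1 i) p.2)) := by
      intro p hp
      rw [Finset.mem_filter] at hp
      obtain ⟨hpT, hi⟩ := hp
      push_neg at hi
      obtain ⟨i, hi⟩ := hi
      exact Finset.mem_biUnion.2 ⟨i, Finset.mem_univ _, Finset.mem_filter.2 ⟨hpT, hi⟩⟩
    have hone : ∀ i : Fin (k+1),
        (T.filter (fun p => R (p.1 i) p.2)).card ≤ D.card * (goodSet A B R k).card := by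
      intro i
      have : (T.filter (fun p => R (p.1 i) p.2)).card ≤ (D ×ˢ goodSet A B R k).card := by
        apply Finset.card_le_card_of_injOn
          (fun p => ((p.1 i, p.2), fun j => p.1 (i.succAbove j)))
        · intro p hp
          rw [Finset.mem_coe, Finset.mem_filter] at hp
          obtain ⟨hpT, hRi⟩ := hp
          rw [hTdef, Finset.mem_product] at hpT
          obtain ⟨hp1, hp2⟩ := hpT
          obtain ⟨hg1, hg2, hg3⟩ := mem_goodSet.1 hp1
          obtain ⟨hp2A, _⟩ := Finset.mem_sdiff.1 hp2
          refine Finset.mem_product.2 ⟨?_, ?_⟩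
          · exact Finset.mem_filter.2 ⟨Finset.mem_product.2 ⟨hg1 i, hp2A⟩, hRi⟩
          · refine mem_goodSet.2 ⟨fun j => hg1 _, fun j => hg2 _, fun j j' hjj' => ?_⟩
            exact hg3 _ _ (fun h => hjj' (Fin.succAbove_right_injective h))
        · intro p hp q hq h
          simp only [Prod.mk.injEq] at h
          obtain ⟨⟨hi1, hi2⟩, hrest⟩ := h
          have h1 : p.1 = q.1 := by
            funext j
            rcases eq_or_ne j i with rfl | hne
            · exact hi1
            · obtain ⟨l, hl⟩ := Fin.exists_succAbove_eq hne
              have := congrFun hrest l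
              simpa [hl] using this
          exact Prod.ext h1 hi2
      calc (T.filter (fun p => R (p.1 i) p.2)).card ≤ (D ×ˢ goodSet A B R k).card := this
        _ = D.card * (goodSet A B R k).card := Finset.card_product _ _
    calc (T.filter (fun p => ¬ ∀ i, ¬ R (p.1 i) p.2)).card
        ≤ _ := Finset.card_le_card hsub
      _ ≤ ∑ i : Fin (k+1), (T.filter (fun p => R (p.1 i) p.2)).card := Finset.card_biUnion_le
      _ ≤ ∑ _i : Fin (k+1), D.card * (goodSet A B R k).card :=
          Finset.sum_le_sum (fun i _ => hone i)
      _ = (k+1) * (D.card * (goodSet A B R k).card) := by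
          rw [Finset.sum_const, Finset.card_univ, Fintype.card_fin, smul_eq_mul]
  calc (A \ B).card * (goodSet A B R (k+1)).card = T.card := hT.symm
    _ = (T.filter (fun p => ∀ i, ¬ R (p.1 i) p.2)).card
        + (T.filter (fun p => ¬ ∀ i, ¬ R (p.1 i) p.2)).card := hsplit.symm
    _ ≤ (goodSet A B R (k+2)).card + (k+1) * (D.card * (goodSet A B R k).card) :=
        Nat.add_le_add hgood hbad
    _ = (goodSet A B R (k+2)).card + (k+1) * D.card * (goodSet A B R k).card := by ring

private lemma analytic (q δ : ℝ) (hq : 0 < q) (hδ : 0 < δ) (p : ℕ → ℝ)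
    (hp0 : p 0 = 1) (hp1 : p 1 = q)
    (hrec : ∀ j : ℕ, q * p (j+1) - ((j : ℝ)+1) * δ * p j ≤ p (j+2))
    (k : ℕ) (hk : 4 * (k : ℝ) * δ ≤ q^2) :
    (q - 2 * (k : ℝ) * δ / q) ^ k ≤ p k := by
  have hc : 0 ≤ q - 2 * (k : ℝ) * δ / q := by
    rw [sub_nonneg, div_le_iff₀ hq]
    nlinarith [mul_nonneg (Nat.cast_nonneg (α := ℝ) k) hδ.le]
  have G : ∀ j, j < k → 0 < p j ∧ (q - 2 * (j : ℝ) * δ / q) * p j ≤ p (j+1) := by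
    intro j
    induction j with
    | zero =>
      intro _
      constructor
      · rw [hp0]; norm_num
      · rw [hp0, hp1]; simp
    | succ j ih =>
      intro hjk
      obtain ⟨hpj, hstep⟩ := ih (Nat.lt_of_succ_lt hjk)
      have hjle : (j : ℝ) ≤ (k : ℝ) := by
        exact_mod_cast le_of_lt (Nat.lt_of_succ_lt hjk)
      have hj1le : ((j : ℝ) + 1) ≤ (k : ℝ) := by exact_mod_cast Nat.le_of_lt hjk
      have hjδ : (j : ℝ) * δ ≤ (k : ℝ) * δ := mul_le_mul_of_nonneg_right hjle hδ.le
      have hcj_half : q / 2 ≤ q - 2 * (j : ℝ) * δ / q := by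
        have h2 : 2 * (j : ℝ) * δ / q ≤ q / 2 := by
          rw [div_le_iff₀ hq]
          nlinarith
        linarith
      have hcj_pos : 0 < q - 2 * (j : ℝ) * δ / q := lt_of_lt_of_le (by linarith) hcj_half
      have hpj1 : 0 < p (j+1) := lt_of_lt_of_le (mul_pos hcj_pos hpj) hstep
      refine ⟨hpj1, ?_⟩
      have hpj_le : p j ≤ p (j+1) / (q - 2 * (j : ℝ) * δ / q) := by
        rw [le_div_iff₀ hcj_pos]
        calc p j * (q - 2 * (j : ℝ) * δ / q) = (q - 2 * (j : ℝ) * δ / q) * p j := by ring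
          _ ≤ p (j+1) := hstep
      have hdiv : p (j+1) / (q - 2 * (j : ℝ) * δ / q) ≤ p (j+1) / (q / 2) :=
        div_le_div_of_nonneg_left (le_of_lt hpj1) (by linarith) hcj_half
      have step1 : (q - 2 * ((j : ℕ) + 1 : ℝ) * δ / q) * p (j+1)
          = q * p (j+1) - ((j : ℝ) + 1) * δ * (p (j+1) / (q / 2)) := by
        field_simp
      have step2 : ((j : ℝ) + 1) * δ * p j
          ≤ ((j : ℝ) + 1) * δ * (p (j+1) / (q / 2)) := by
        have h1 : p j ≤ p (j+1) / (q / 2) := le_trans hpj_le hdiv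
        have h2 : (0:ℝ) ≤ ((j : ℝ) + 1) * δ := by positivity
        exact mul_le_mul_of_nonneg_left h1 h2
      have := hrec j
      push_cast
      push_cast at step1
      rw [step1]
      linarith
  have hcle : ∀ j : ℕ, j ≤ k →
      q - 2 * (k : ℝ) * δ / q ≤ q - 2 * (j : ℝ) * δ / q := by
    intro j hj
    have : (j : ℝ) ≤ (k : ℝ) := by exact_mod_cast hj
    have hd : 0 ≤ δ / q := by positivity
    have : 2 * (j : ℝ) * δ / q ≤ 2 * (k : ℝ) * δ / q := by
      rw [mul_div_assoc, mul_div_assoc, mul_assoc, mul_assoc]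
      gcongr
    linarith
  have main : ∀ j, j ≤ k → (q - 2 * (k : ℝ) * δ / q) ^ j ≤ p j := by
    intro j
    induction j with
    | zero => intro _; simp [hp0]
    | succ j ih =>
      intro hjk
      have hj : j ≤ k := Nat.le_of_succ_le hjk
      have hjlt : j < k := hjk
      obtain ⟨hpj, hstep⟩ := G j hjlt
      have h1 : (q - 2 * (k : ℝ) * δ / q) ^ j ≤ p j := ih hj
      have h2 : q - 2 * (k : ℝ) * δ / q ≤ q - 2 * (j : ℝ) * δ / q := hcle j hj
      calc (q - 2 * (k : ℝ) * δ / q) ^ (j+1)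
          = (q - 2 * (k : ℝ) * δ / q) * (q - 2 * (k : ℝ) * δ / q) ^ j := by ring
        _ ≤ (q - 2 * (j : ℝ) * δ / q) * p j := by
            apply mul_le_mul h2 h1 (pow_nonneg hc j) (le_trans hc h2)
        _ ≤ p (j+1) := hstep
  exact main k le_rfl

private lemma measure_pi_goodSet [MeasurableSpace α] [MeasurableSingletonClass α]
    (A : Finset α) (hA : A.Nonempty) (B : Finset α) (R : α → α → Prop) (k : ℕ) :
    (Measure.pi fun _ : Fin k => (PMF.uniformOfFinset A hA).toMeasure)
        {x : Fin k → α | (∀ i, x i ∉ B) ∧ ∀ i j, i ≠ j → ¬ R (x i) (x j)} =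
      ((goodSet A B R k).card : ℝ≥0∞) * ((A.card : ℝ≥0∞)⁻¹) ^ k := by
  classical
  set μ := (PMF.uniformOfFinset A hA).toMeasure with hμ
  set ν := Measure.pi fun _ : Fin k => μ with hν
  have hsing : ∀ a ∈ A, μ {a} = (A.card : ℝ≥0∞)⁻¹ := by
    intro a ha
    rw [hμ, PMF.toMeasure_apply_singleton _ _ (measurableSet_singleton a),
      PMF.uniformOfFinset_apply, if_pos ha]
  have hμA : μ ↑A = 1 := by
    rw [hμ]
    exact (PMF.toMeasure_apply_eq_one_iff _ A.finite_toSet.measurableSet).2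
      (by rw [PMF.support_uniformOfFinset])
  have hcube_meas : MeasurableSet (Set.pi Set.univ fun _ : Fin k => (↑A : Set α)) :=
    MeasurableSet.univ_pi (fun _ => A.finite_toSet.measurableSet)
  have hcube : ν (Set.pi Set.univ fun _ : Fin k => (↑A : Set α)) = 1 := by
    rw [hν, Measure.pi_pi]
    simp [hμA]
  have hcompl : ν (Set.pi Set.univ fun _ : Fin k => (↑A : Set α))ᶜ = 0 :=
    (prob_compl_eq_zero_iff hcube_meas).2 hcube
  rw [measure_inter_of_compl_null ν hcompl]
  have hEq : {x : Fin k → α | (∀ i, x i ∉ B) ∧ ∀ i j, i ≠ j → ¬ R (x i) (x j)}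
      ∩ (Set.pi Set.univ fun _ : Fin k => (↑A : Set α)) = ↑(goodSet A B R k) := by
    ext x
    simp only [Set.mem_inter_iff, Set.mem_setOf_eq, Set.mem_pi, Set.mem_univ, forall_true_left,
      Finset.mem_coe, mem_goodSet, Finset.mem_coe]
    tauto
  rw [hEq, measure_finset_eq_sum]
  have hval : ∀ x ∈ goodSet A B R k, ν {x} = ((A.card : ℝ≥0∞)⁻¹) ^ k := by
    intro x hx
    obtain ⟨h1, _, _⟩ := mem_goodSet.1 hx
    rw [← Set.univ_pi_singleton, hν, Measure.pi_pi]
    have : ∀ i : Fin k, μ {x i} = (A.card : ℝ≥0∞)⁻¹ := fun i => hsing _ (h1 i)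
    simp [this]
  rw [Finset.sum_congr rfl hval, Finset.sum_const, nsmul_eq_mul]

end Aux

theorem stmt6 {α : Type*} [MeasurableSpace α] [MeasurableSingletonClass α]
    (A : Finset α) (hA : A.Nonempty) (B : Finset α) (hB : B ⊆ A)
    (R : α → α → Prop) (hR : Symmetric R) :
    ∀ (μ : Measure α), μ = (PMF.uniformOfFinset A hA).toMeasure →
    ∀ (δ q : ℝ), δ = ((μ.prod μ) {p : α × α | R p.1 p.2}).toReal →
      q = (μ {a | a ∉ B}).toReal → 0 < δ →
    ∀ k : ℕ, 1 ≤ k → (k : ℝ) ≤ q ^ 2 / (4 * δ) →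
      (q - 2 * k * δ / q) ^ k ≤
        ((Measure.pi fun _ : Fin k => μ)
          {x : Fin k → α | (∀ i, x i ∉ B) ∧ ∀ i j, i ≠ j → ¬ R (x i) (x j)}).toReal := by
  classical
  intro μ hμ δ q hδdef hqdef hδpos k hk1 hk2
  subst hμ
  set μ := (PMF.uniformOfFinset A hA).toMeasure with hμ
  have hn0 : 0 < A.card := hA.card_pos
  have hnR : (0 : ℝ) < (A.card : ℝ) := by exact_mod_cast hn0
  have hnE : (A.card : ℝ≥0∞) ≠ 0 := by exact_mod_cast hn0.ne'
  have hnEtop : (A.card : ℝ≥0∞) ≠ ⊤ := ENNReal.natCast_ne_top _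
  have hsing : ∀ a ∈ A, μ {a} = (A.card : ℝ≥0∞)⁻¹ := by
    intro a ha
    rw [hμ, PMF.toMeasure_apply_singleton _ _ (measurableSet_singleton a),
      PMF.uniformOfFinset_apply, if_pos ha]
  have hμA : μ ↑A = 1 := by
    rw [hμ]
    exact (PMF.toMeasure_apply_eq_one_iff _ A.finite_toSet.measurableSet).2
      (by rw [PMF.support_uniformOfFinset])
  have hAcompl : μ (↑A : Set α)ᶜ = 0 :=
    (prob_compl_eq_zero_iff A.finite_toSet.measurableSet).2 hμA
  -- value of q
  have hq : q = ((A \ B).card : ℝ) / (A.card : ℝ) := by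
    have h1 : μ {a : α | a ∉ B} = μ ↑(A \ B) := by
      rw [measure_inter_of_compl_null μ hAcompl]
      congr 1
      ext a
      simp only [Set.mem_inter_iff, Set.mem_setOf_eq, Finset.coe_sdiff, Set.mem_diff,
        Finset.mem_coe]
      tauto
    have h2 : μ ↑(A \ B) = ((A \ B).card : ℝ≥0∞) * (A.card : ℝ≥0∞)⁻¹ := by
      rw [measure_finset_eq_sum]
      have hval : ∀ a ∈ A \ B, μ {a} = (A.card : ℝ≥0∞)⁻¹ := fun a ha =>
        hsing a (Finset.mem_sdiff.1 ha).1
      rw [Finset.sum_congr rfl hval, Finset.sum_const, nsmul_eq_mul]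
    rw [hqdef, h1, h2, ENNReal.toReal_mul, ENNReal.toReal_inv, ENNReal.toReal_natCast,
      ENNReal.toReal_natCast, div_eq_mul_inv]
  -- value of delta
  set D : Finset (α × α) := (A ×ˢ A).filter (fun p => R p.1 p.2) with hDdef
  have hδ : δ = (D.card : ℝ) / ((A.card : ℝ) * (A.card : ℝ)) := by
    have hAA : (μ.prod μ) ((↑A : Set α) ×ˢ (↑A : Set α)) = 1 := by
      rw [Measure.prod_prod, hμA, one_mul]
    have hAAmeas : MeasurableSet ((↑A : Set α) ×ˢ (↑A : Set α)) :=
      A.finite_toSet.measurableSet.prod A.finite_toSet.measurableSet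
    have hAAcompl : (μ.prod μ) ((↑A : Set α) ×ˢ (↑A : Set α))ᶜ = 0 :=
      (prob_compl_eq_zero_iff hAAmeas).2 hAA
    have h1 : (μ.prod μ) {p : α × α | R p.1 p.2} = (μ.prod μ) ↑D := by
      rw [measure_inter_of_compl_null (μ.prod μ) hAAcompl]
      congr 1
      ext ⟨a, b⟩
      simp only [Set.mem_inter_iff, Set.mem_setOf_eq, Set.mem_prod, Finset.mem_coe,
        hDdef, Finset.mem_filter, Finset.mem_product]
      tauto
    have h2 : (μ.prod μ) ↑D = (D.card : ℝ≥0∞) * ((A.card : ℝ≥0∞)⁻¹ * (A.card : ℝ≥0∞)⁻¹) := by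
      rw [measure_finset_eq_sum]
      have hval : ∀ p ∈ D, (μ.prod μ) {p} = (A.card : ℝ≥0∞)⁻¹ * (A.card : ℝ≥0∞)⁻¹ := by
        intro p hp
        rw [hDdef, Finset.mem_filter, Finset.mem_product] at hp
        rw [show ({p} : Set (α × α)) = {p.1} ×ˢ {p.2} by
            rw [Set.singleton_prod_singleton]]
        rw [Measure.prod_prod, hsing _ hp.1.1, hsing _ hp.1.2]
      rw [Finset.sum_congr rfl hval, Finset.sum_const, nsmul_eq_mul]
    rw [hδdef, h1, h2, ENNReal.toReal_mul, ENNReal.toReal_mul, ENNReal.toReal_inv,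
      ENNReal.toReal_natCast, ENNReal.toReal_natCast, div_eq_mul_inv, mul_inv]
  -- positivity of q
  have hqpos : 0 < q := by
    have hqnonneg : 0 ≤ q := by rw [hq]; positivity
    rcases eq_or_lt_of_le hqnonneg with h | h
    · exfalso
      rw [← h] at hk2
      norm_num at hk2
      have : (1 : ℝ) ≤ (k : ℝ) := by exact_mod_cast hk1
      linarith
    · exact h
  -- the sequence
  set p : ℕ → ℝ := fun j => ((goodSet A B R j).card : ℝ) / (A.card : ℝ) ^ j with hpdef
  have hp0 : p 0 = 1 := by
    simp [hpdef, card_goodSet_zero]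
  have hp1 : p 1 = q := by
    rw [hpdef, hq]
    simp [card_goodSet_one]
  have hrec : ∀ j : ℕ, q * p (j+1) - ((j : ℝ)+1) * δ * p j ≤ p (j+2) := by
    intro j
    have hcast : ((A \ B).card : ℝ) * ((goodSet A B R (j+1)).card : ℝ) ≤
        ((goodSet A B R (j+2)).card : ℝ)
          + ((j : ℝ)+1) * (D.card : ℝ) * ((goodSet A B R j).card : ℝ) := by
      exact_mod_cast key_count hR j
    have hm : (0 : ℝ) < (A.card : ℝ) ^ (j+2) := by positivity
    have e1 : q * p (j+1) = ((A \ B).card : ℝ) * ((goodSet A B R (j+1)).card : ℝ)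
        / (A.card : ℝ) ^ (j+2) := by
      rw [hq]
      show ((A \ B).card : ℝ) / (A.card : ℝ)
          * (((goodSet A B R (j+1)).card : ℝ) / (A.card : ℝ) ^ (j+1)) = _
      rw [div_mul_div_comm]
      congr 1
      rw [← pow_succ']
    have e2 : ((j : ℝ)+1) * δ * p j = ((j : ℝ)+1) * (D.card : ℝ)
        * ((goodSet A B R j).card : ℝ) / (A.card : ℝ) ^ (j+2) := by
      rw [hδ]
      show ((j : ℝ)+1) * ((D.card : ℝ) / ((A.card : ℝ) * (A.card : ℝ)))
          * (((goodSet A B R j).card : ℝ) / (A.card : ℝ) ^ j) = _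
      rw [← mul_div_assoc, ← mul_div_assoc, div_mul_eq_mul_div, div_div]
      congr 1
      ring
    have e3 : p (j+2) = ((goodSet A B R (j+2)).card : ℝ) / (A.card : ℝ) ^ (j+2) := rfl
    rw [e1, e2, e3, ← sub_div]
    exact (div_le_div_iff_of_pos_right hm).mpr (by linarith)
  -- bound hypothesis for analytic lemma
  have hkbound : 4 * (k : ℝ) * δ ≤ q ^ 2 := by
    have h4δ : (0 : ℝ) < 4 * δ := by linarith
    rw [le_div_iff₀ h4δ] at hk2
    linarith
  have hmain := analytic q δ hqpos hδpos p hp0 hp1 hrec k hkbound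
  -- compute the measure
  rw [measure_pi_goodSet A hA B R k, ENNReal.toReal_mul, ENNReal.toReal_pow,
    ENNReal.toReal_inv, ENNReal.toReal_natCast, ENNReal.toReal_natCast]
  refine hmain.trans (le_of_eq ?_)
  show ((goodSet A B R k).card : ℝ) / (A.card : ℝ) ^ k = _
  rw [div_eq_mul_inv, ← inv_pow]

end
end
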